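/- Let c_1, …, c_n be one-time simple coins with c_i = (P_i, μ i), 0 < P_i < 1, and rates r_i = μ_i/P_i, and let E ≥ 0 be a penalty. For a permutation π of {1, …, n}, the ordering (c_{π(1)}, …, c_{π(n)}) is an optimal ordering, i.e. COST((c_{π(1)}, …, c_{π(n)}), E) ≤ COST((c_{σ(1)}, …, c_{σ(n)}), E) for every permutation σ, if and only if r_{π(i)} ≤ r_{π(i+1)} for all i = 1, …, n−1. -/

import Mathlib

/-- Expected cost of tossing a list of simple coins `(P, μ)` in order,
paying the penalty `E` if all tosses fail. -/
noncomputable def listCost (l : List (ℝ × ℝ)) (E : ℝ) : ℝ :=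
  l.foldr (fun c a => c.2 + (1 - c.1) * a) E

lemma listCost_cons (x : ℝ × ℝ) (l : List (ℝ × ℝ)) (E : ℝ) :
    listCost (x :: l) E = x.2 + (1 - x.1) * listCost l E := rfl

lemma cons_le_cons_iff {x : ℝ × ℝ} (hx : x.1 < 1) {l₁ l₂ : List (ℝ × ℝ)} {E : ℝ} :
    listCost (x :: l₁) E ≤ listCost (x :: l₂) E ↔ listCost l₁ E ≤ listCost l₂ E := by
  rw [listCost_cons, listCost_cons, add_le_add_iff_left,
    mul_le_mul_iff_right₀ (by linarith : (0:ℝ) < 1 - x.1)]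

lemma swap_head_iff {a b : ℝ × ℝ} {t : List (ℝ × ℝ)} {E : ℝ} :
    listCost (a :: b :: t) E ≤ listCost (b :: a :: t) E ↔ a.2 * b.1 ≤ b.2 * a.1 := by
  have h : listCost (a :: b :: t) E - listCost (b :: a :: t) E = a.2 * b.1 - b.2 * a.1 := by
    simp only [listCost_cons]; ring
  constructor <;> intro h' <;> nlinarith [h]

/-- The rate-comparison relation. -/
def Rle (a b : ℝ × ℝ) : Prop := a.2 / a.1 ≤ b.2 / b.1

instance : IsTrans (ℝ × ℝ) Rle := ⟨fun _ _ _ => le_trans⟩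

lemma rle_iff {a b : ℝ × ℝ} (ha : 0 < a.1) (hb : 0 < b.1) :
    Rle a b ↔ a.2 * b.1 ≤ b.2 * a.1 := div_le_div_iff₀ ha hb

lemma cost_move_front : ∀ (u : List (ℝ × ℝ)) (b : ℝ × ℝ) (v : List (ℝ × ℝ)),
    (u ++ b :: v).Pairwise Rle → (∀ x ∈ u ++ b :: v, 0 < x.1 ∧ x.1 < 1) → ∀ E : ℝ,
    listCost (u ++ b :: v) E ≤ listCost (b :: (u ++ v)) E := by
  intro u
  induction u with
  | nil => intro b v _ _ E; simp
  | cons a u' ih =>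
    intro b v hs hp E
    have ha := hp a (by simp)
    have hb : b ∈ u' ++ b :: v := by simp
    have hbP := hp b (by simp)
    have h1 : listCost (a :: (u' ++ b :: v)) E ≤ listCost (a :: b :: (u' ++ v)) E := by
      rw [cons_le_cons_iff ha.2]
      exact ih b v hs.of_cons (fun x hx => hp x (List.mem_cons_of_mem a hx)) E
    have h2 : listCost (a :: b :: (u' ++ v)) E ≤ listCost (b :: a :: (u' ++ v)) E := by
      rw [swap_head_iff]
      have hr : Rle a b := (List.pairwise_cons.1 hs).1 b hb
      exact (rle_iff ha.1 hbP.1).1 hr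
    calc listCost ((a :: u') ++ b :: v) E = listCost (a :: (u' ++ b :: v)) E := rfl
      _ ≤ listCost (b :: a :: (u' ++ v)) E := le_trans h1 h2
      _ = listCost (b :: ((a :: u') ++ v)) E := rfl

lemma sorted_min : ∀ (l' l : List (ℝ × ℝ)), l.Perm l' →
    (∀ x ∈ l, 0 < x.1 ∧ x.1 < 1) → l.Pairwise Rle → ∀ E : ℝ,
    listCost l E ≤ listCost l' E := by
  intro l'
  induction l' with
  | nil => intro l hperm _ _ E; rw [List.perm_nil.1 hperm]
  | cons b t' ih =>
    intro l hperm hp hs E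
    have hb : b ∈ l := hperm.mem_iff.2 (List.mem_cons_self)
    obtain ⟨u, v, rfl⟩ := List.append_of_mem hb
    have h1 := cost_move_front u b v hs hp E
    have hperm' : (u ++ v).Perm t' :=
      (List.perm_middle.symm.trans hperm).cons_inv
    have hsub : List.Sublist (u ++ v) (u ++ b :: v) :=
      List.Sublist.append_left (List.sublist_cons_self b v) u
    have h2 : listCost (u ++ v) E ≤ listCost t' E :=
      ih _ hperm' (fun x hx => hp x (hsub.mem hx)) (hs.sublist hsub) E
    calc listCost (u ++ b :: v) E ≤ listCost (b :: (u ++ v)) E := h1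
      _ ≤ listCost (b :: t') E := (cons_le_cons_iff (hp b hb).2).2 h2

lemma ofFn_swap_cost_iff : ∀ (i n : ℕ) (h : i + 1 < n) (f : Fin n → ℝ × ℝ),
    (∀ j, 0 < (f j).1 ∧ (f j).1 < 1) → ∀ E : ℝ,
    (listCost (List.ofFn f) E ≤
      listCost (List.ofFn
        (fun k => f (Equiv.swap ⟨i, Nat.lt_of_succ_lt h⟩ ⟨i + 1, h⟩ k))) E
    ↔ (f ⟨i, Nat.lt_of_succ_lt h⟩).2 * (f ⟨i + 1, h⟩).1
        ≤ (f ⟨i + 1, h⟩).2 * (f ⟨i, Nat.lt_of_succ_lt h⟩).1) := by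
  intro i
  induction i with
  | zero =>
    intro n h f hp E
    obtain ⟨m, rfl⟩ : ∃ m, n = m + 2 := ⟨n - 2, by omega⟩
    have ha : (⟨0, Nat.lt_of_succ_lt h⟩ : Fin (m + 2)) = 0 := rfl
    have hb : (⟨0 + 1, h⟩ : Fin (m + 2)) = 1 := rfl
    have e1 : List.ofFn f = f 0 :: f 1 :: List.ofFn (fun k : Fin m => f k.succ.succ) := by
      rw [List.ofFn_succ, List.ofFn_succ]; rfl
    have e3 : ∀ k : Fin m,
        Equiv.swap (0 : Fin (m + 2)) 1 k.succ.succ = k.succ.succ := by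
      intro k
      apply Equiv.swap_apply_of_ne_of_ne
      · simp [Fin.ext_iff]
      · simp [Fin.ext_iff]
    have e2 : List.ofFn (fun k => f (Equiv.swap (⟨0, Nat.lt_of_succ_lt h⟩ : Fin (m+2)) ⟨0 + 1, h⟩ k))
        = f 1 :: f 0 :: List.ofFn (fun k : Fin m => f k.succ.succ) := by
      rw [List.ofFn_succ, List.ofFn_succ, ha, hb]
      have t1 : (Equiv.swap (0 : Fin (m+2)) 1) 0 = 1 := Equiv.swap_apply_left 0 1
      have t2 : (Equiv.swap (0 : Fin (m+2)) 1) (Fin.succ 0) = 0 := by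
        have e : (Fin.succ 0 : Fin (m+2)) = 1 := rfl
        rw [e]; exact Equiv.swap_apply_right 0 1
      have etail : (fun k : Fin m => f ((Equiv.swap (0 : Fin (m+2)) 1) k.succ.succ))
          = fun k : Fin m => f k.succ.succ := funext fun k => by rw [e3 k]
      rw [t1, t2, etail]
    rw [e1, e2, ha, hb, swap_head_iff]
  | succ i ih =>
    intro n h f hp E
    obtain ⟨m, rfl⟩ : ∃ m, n = m + 1 := ⟨n - 1, by omega⟩
    have him : i + 1 < m := by omega
    have hsw0 : Equiv.swap (⟨i + 1, Nat.lt_of_succ_lt h⟩ : Fin (m+1)) ⟨i + 1 + 1, h⟩ 0 = 0 := by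
      apply Equiv.swap_apply_of_ne_of_ne
      · simp [Fin.ext_iff]
      · simp [Fin.ext_iff]
    have hswsucc : ∀ k : Fin m,
        Equiv.swap (⟨i + 1, Nat.lt_of_succ_lt h⟩ : Fin (m+1)) ⟨i + 1 + 1, h⟩ k.succ
          = (Equiv.swap (⟨i, Nat.lt_of_succ_lt him⟩ : Fin m) ⟨i + 1, him⟩ k).succ := by
      intro k
      have ea : (⟨i + 1, Nat.lt_of_succ_lt h⟩ : Fin (m+1))
          = Fin.succ ⟨i, Nat.lt_of_succ_lt him⟩ := rfl
      have eb : (⟨i + 1 + 1, h⟩ : Fin (m+1)) = Fin.succ ⟨i + 1, him⟩ := rfl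
      rw [ea, eb, (Fin.succ_injective m).swap_apply]
    have e1 : List.ofFn f = f 0 :: List.ofFn (fun k : Fin m => f k.succ) :=
      List.ofFn_succ
    have e2 : List.ofFn (fun k => f (Equiv.swap (⟨i + 1, Nat.lt_of_succ_lt h⟩ : Fin (m+1)) ⟨i + 1 + 1, h⟩ k))
        = f 0 :: List.ofFn (fun k : Fin m =>
            (fun j : Fin m => f j.succ)
              (Equiv.swap (⟨i, Nat.lt_of_succ_lt him⟩ : Fin m) ⟨i + 1, him⟩ k)) := by
      have etail : (fun k : Fin m =>
            f ((Equiv.swap (⟨i + 1, Nat.lt_of_succ_lt h⟩ : Fin (m+1)) ⟨i + 1 + 1, h⟩) k.succ))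
          = fun k : Fin m =>
            (fun j : Fin m => f j.succ)
              ((Equiv.swap (⟨i, Nat.lt_of_succ_lt him⟩ : Fin m) ⟨i + 1, him⟩) k) :=
        funext fun k => by simp only []; rw [hswsucc k]
      rw [List.ofFn_succ, hsw0, etail]
    rw [e1, e2, cons_le_cons_iff (hp 0).2]
    exact ih m him (fun j => f j.succ) (fun j => hp _) E

/-- Lemma 2: an ordering `(c_{π 0}, …, c_{π (n-1)})` of a set of one-time simple
coins is optimal (w.r.t. any penalty `E ≥ 0`) if and only if the rates along
the ordering are nondecreasing. -/
theorem optimal_ordering_iff_sorted_by_rate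
    (n : ℕ) (c : Fin n → ℝ × ℝ)
    (hP : ∀ i, 0 < (c i).1 ∧ (c i).1 < 1) (hμ : ∀ i, 0 ≤ (c i).2)
    (E : ℝ) (hE : 0 ≤ E) (π : Equiv.Perm (Fin n)) :
    (∀ σ : Equiv.Perm (Fin n),
        listCost (List.ofFn (fun k => c (π k))) E
          ≤ listCost (List.ofFn (fun k => c (σ k))) E)
    ↔ (∀ (i : ℕ) (h : i + 1 < n),
        (c (π ⟨i, Nat.lt_of_succ_lt h⟩)).2 / (c (π ⟨i, Nat.lt_of_succ_lt h⟩)).1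
          ≤ (c (π ⟨i + 1, h⟩)).2 / (c (π ⟨i + 1, h⟩)).1) := by
  constructor
  · intro hopt i h
    have hf : ∀ j : Fin n, 0 < ((fun k => c (π k)) j).1 ∧ ((fun k => c (π k)) j).1 < 1 :=
      fun j => hP (π j)
    have key := (ofFn_swap_cost_iff i n h (fun k => c (π k)) hf E).1
      (hopt (π * Equiv.swap ⟨i, Nat.lt_of_succ_lt h⟩ ⟨i + 1, h⟩))
    exact (div_le_div_iff₀ (hP (π ⟨i, Nat.lt_of_succ_lt h⟩)).1 (hP (π ⟨i + 1, h⟩)).1).2 key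
  · intro hsorted σ
    apply sorted_min
    · exact (Equiv.Perm.ofFn_comp_perm π c).trans (Equiv.Perm.ofFn_comp_perm σ c).symm
    · intro x hx
      obtain ⟨j, rfl⟩ := List.mem_ofFn.1 hx
      exact hP _
    · apply List.isChain_iff_pairwise.mp
      rw [List.isChain_iff_getElem]
      intro i hi
      have hi' : i + 1 < n := by
        simp only [List.length_ofFn] at hi; omega
      rw [List.getElem_ofFn, List.getElem_ofFn]
      exact hsorted i hi'
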